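/- Let X be a Hausdorff topological space, x ∈ X, and n ≥ 1. Let 𝒦 be the collection of all compact subsets of X containing x, directed by inclusion. Suppose G is a group and for each K ∈ 𝒦 a group homomorphism p_K : π_n(K,x) → G is given such that p_K = p_{K'} ∘ (ι_{KK'})_* whenever K ⊆ K' in 𝒦, where ι_{KK'} : K → K' is the inclusion. Then there exists a unique group homomorphism σ : π_n(X,x) → G such that σ ∘ (ι_K)_* = p_K for every K ∈ 𝒦, where ι_K : K → X is the inclusion. (That is, π_n(X,x) together with the inclusion-induced homomorphisms (ι_K)_* is the direct limit of the direct system of groups {π_n(K,x)}_{K ∈ 𝒦}.) -/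

import Mathlib

open unitInterval Topology Topology.Homotopy

/-- The map induced on `N`-th homotopy groups (sets of homotopy classes rel the cube
boundary) by a continuous basepoint-preserving map `h : (A, a) → (B, b)`, given by
composing representatives with `h`. -/
def HomotopyGroup.map (N : Type*) {A B : Type*} [TopologicalSpace A] [TopologicalSpace B]
    {a : A} {b : B} (h : C(A, B)) (hb : h a = b) :
    HomotopyGroup N A a → HomotopyGroup N B b :=
  Quotient.map
    (fun p => ⟨h.comp p.1, fun y hy => by
      simp only [ContinuousMap.comp_apply, p.2 y hy, hb]⟩)
    (fun p q hpq => hpq.map fun F => F.compContinuousMap h)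

namespace Stmt7Aux

open GenLoop

variable {N X : Type*} [TopologicalSpace X] {x : X}

/-- The underlying map on generalized loops. -/
def mapG {A B : Type*} [TopologicalSpace A] [TopologicalSpace B] {a : A} {b : B}
    (h : C(A, B)) (hb : h a = b) (p : Ω^ N A a) : Ω^ N B b :=
  ⟨h.comp p.1, fun y hy => by
    simp only [ContinuousMap.comp_apply, p.2 y hy, hb]⟩

theorem map_mk {A B : Type*} [TopologicalSpace A] [TopologicalSpace B] {a : A} {b : B}
    (h : C(A, B)) (hb : h a = b) (p : Ω^ N A a) :
    HomotopyGroup.map N h hb ⟦p⟧ = ⟦mapG h hb p⟧ := rfl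

/-- Corestriction of a generalized loop to a subset containing its range. -/
def restr {K : Set X} (p : Ω^ N X x) (h : Set.range ⇑p ⊆ K) (hx : x ∈ K) :
    Ω^ N K ⟨x, hx⟩ :=
  ⟨⟨fun y => ⟨p y, h (Set.mem_range_self y)⟩, (p.1.continuous.subtype_mk _)⟩,
    fun y hy => Subtype.ext (p.2 y hy)⟩

theorem mapG_val_restr {K : Set X} (p : Ω^ N X x) (h : Set.range ⇑p ⊆ K) (hx : x ∈ K) :
    mapG (⟨Subtype.val, continuous_subtype_val⟩ : C(K, X)) rfl (restr p h hx) = p :=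
  GenLoop.ext _ _ fun _ => rfl

theorem mapG_incl_restr {K K' : Set X} (hKK' : K ⊆ K') (p : Ω^ N X x)
    (h : Set.range ⇑p ⊆ K) (hx : x ∈ K) (hx' : x ∈ K') :
    mapG (⟨Set.inclusion hKK', continuous_inclusion hKK'⟩ : C(K, K')) rfl (restr p h hx)
      = restr p (h.trans hKK') hx' :=
  GenLoop.ext _ _ fun _ => rfl

/-- A homotopy rel boundary corestricts to any subset containing its range. -/
theorem restr_homotopic {K : Set X} {p q : Ω^ N X x}
    (H : p.1.HomotopyRel q.1 (Cube.boundary N))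
    (hH : Set.range ⇑H.toContinuousMap ⊆ K)
    (hp : Set.range ⇑p ⊆ K) (hq : Set.range ⇑q ⊆ K) (hx : x ∈ K) :
    GenLoop.Homotopic (restr p hp hx) (restr q hq hx) := by
  refine ⟨{ toFun := fun z => ⟨H.toContinuousMap z, hH (Set.mem_range_self z)⟩
            continuous_toFun := H.toContinuousMap.continuous.subtype_mk _
            map_zero_left := fun y => Subtype.ext (H.apply_zero y)
            map_one_left := fun y => Subtype.ext (H.apply_one y)
            prop' := fun t y hy => Subtype.ext ?_ }⟩
  exact H.prop' t y hy

theorem transAt_apply [DecidableEq N] (i : N) (f g : Ω^ N X x) (y : I^N) :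
    transAt i f g y = if (y i : ℝ) ≤ 1 / 2
      then f (Function.update y i <| Set.projIcc 0 1 zero_le_one (2 * y i))
      else g (Function.update y i <| Set.projIcc 0 1 zero_le_one (2 * y i - 1)) := rfl

theorem range_transAt [DecidableEq N] (i : N) (f g : Ω^ N X x) :
    Set.range ⇑(transAt i f g) ⊆ Set.range ⇑f ∪ Set.range ⇑g := by
  rintro _ ⟨y, rfl⟩
  rw [transAt_apply]
  split_ifs
  · exact Or.inl (Set.mem_range_self _)
  · exact Or.inr (Set.mem_range_self _)

theorem restr_transAt [DecidableEq N] {K : Set X} (i : N) (f g : Ω^ N X x)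
    (hf : Set.range ⇑f ⊆ K) (hg : Set.range ⇑g ⊆ K) (hx : x ∈ K)
    (h : Set.range ⇑(transAt i f g) ⊆ K) :
    restr (transAt i f g) h hx = transAt i (restr f hf hx) (restr g hg hx) := by
  refine GenLoop.ext _ _ fun y => Subtype.ext ?_
  show transAt i f g y = ((transAt i (restr f hf hx) (restr g hg hx) y : K) : X)
  rw [transAt_apply, transAt_apply, apply_ite (fun z : K => (z : X))]
  rfl

end Stmt7Aux

/-- Let `X` be Hausdorff, `x ∈ X` and `n ≥ 1` (here `n + 1` with `n : ℕ`).
Given a group `G` and, for each compact `K ⊆ X` with `x ∈ K`, a homomorphism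
`P K : π_n(K, x) →* G` compatible with the maps induced by inclusions `K → K'`, there is
a unique homomorphism `σ : π_n(X, x) →* G` with `σ ∘ (ι_K)_* = P K` for all such `K`;
i.e. `π_n(X, x)` with the inclusion-induced maps is the direct limit of the direct system
of the groups `π_n(K, x)` over the compact subsets of `X` containing `x`. -/
theorem statement7 {X : Type*} [TopologicalSpace X] [T2Space X] (x : X) (n : ℕ)
    (G : Type*) [Group G]
    (P : ∀ K : Set X, IsCompact K → ∀ hx : x ∈ K,
      HomotopyGroup (Fin (n + 1)) K ⟨x, hx⟩ →* G)
    (hP : ∀ (K K' : Set X) (hK : IsCompact K) (hK' : IsCompact K')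
      (hx : x ∈ K) (hx' : x ∈ K') (hKK' : K ⊆ K')
      (β : HomotopyGroup (Fin (n + 1)) K ⟨x, hx⟩),
      P K' hK' hx' (HomotopyGroup.map (Fin (n + 1))
        (⟨Set.inclusion hKK', continuous_inclusion hKK'⟩ : C(K, K')) rfl β) =
      P K hK hx β) :
    ∃! sig : HomotopyGroup (Fin (n + 1)) X x →* G,
      ∀ (K : Set X) (hK : IsCompact K) (hx : x ∈ K)
        (β : HomotopyGroup (Fin (n + 1)) K ⟨x, hx⟩),
        sig (HomotopyGroup.map (Fin (n + 1))
          (⟨Subtype.val, continuous_subtype_val⟩ : C(K, X)) rfl β) = P K hK hx β := by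
  classical
  open Stmt7Aux GenLoop in
  -- basic facts about ranges of generalized loops
  have hcomp : ∀ p : Ω^ (Fin (n + 1)) X x, IsCompact (Set.range ⇑p) := fun p =>
    isCompact_range p.1.continuous
  have hxmem : ∀ p : Ω^ (Fin (n + 1)) X x, x ∈ Set.range ⇑p := fun p =>
    ⟨fun _ => 0, p.2 _ ⟨0, Or.inl rfl⟩⟩
  -- the candidate function
  set sig0 : HomotopyGroup (Fin (n + 1)) X x → G := fun α =>
    P (Set.range ⇑α.out) (hcomp _) (hxmem _) ⟦restr α.out subset_rfl (hxmem _)⟧ with hsig0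
  -- coherence: `sig0 ⟦p⟧` can be computed with any compact `K ⊇ range p`
  have coh : ∀ (p : Ω^ (Fin (n + 1)) X x) (K : Set X) (hK : IsCompact K) (hxK : x ∈ K)
      (h : Set.range ⇑p ⊆ K), sig0 ⟦p⟧ = P K hK hxK ⟦restr p h hxK⟧ := by
    intro p K hK hxK h
    set q : Ω^ (Fin (n + 1)) X x := (⟦p⟧ : HomotopyGroup (Fin (n + 1)) X x).out with hq
    have hqp : GenLoop.Homotopic q p := Quotient.mk_out p
    obtain ⟨H⟩ := hqp
    set L : Set X := Set.range ⇑H.toContinuousMap ∪ K with hL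
    have hLc : IsCompact L := (isCompact_range H.toContinuousMap.continuous).union hK
    have hxL : x ∈ L := Or.inr hxK
    have hqL : Set.range ⇑q ⊆ L := by
      rintro _ ⟨y, rfl⟩
      exact Or.inl ⟨(0, y), H.apply_zero y⟩
    have hpL : Set.range ⇑p ⊆ L := fun z hz => Or.inr (h hz)
    have e1 : P (Set.range ⇑q) (hcomp q) (hxmem q) ⟦restr q subset_rfl (hxmem q)⟧
        = P L hLc hxL ⟦restr q hqL hxL⟧ := by
      rw [← hP (Set.range ⇑q) L (hcomp q) hLc (hxmem q) hxL hqL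
        ⟦restr q subset_rfl (hxmem q)⟧, map_mk, mapG_incl_restr]
    have e2 : P K hK hxK ⟦restr p h hxK⟧ = P L hLc hxL ⟦restr p hpL hxL⟧ := by
      rw [← hP K L hK hLc hxK hxL Set.subset_union_right ⟦restr p h hxK⟧,
        map_mk, mapG_incl_restr]
    have e3 : (⟦restr q hqL hxL⟧ : HomotopyGroup (Fin (n + 1)) L ⟨x, hxL⟩)
        = ⟦restr p hpL hxL⟧ :=
      Quotient.sound (restr_homotopic H Set.subset_union_left hqL hpL hxL)
    show P (Set.range ⇑q) (hcomp q) (hxmem q) ⟦restr q subset_rfl (hxmem q)⟧ = _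
    rw [e1, e3, e2]
  -- `sig0` is multiplicative
  have hmul : ∀ a b : HomotopyGroup (Fin (n + 1)) X x, sig0 (a * b) = sig0 a * sig0 b := by
    intro a b
    induction a using Quotient.inductionOn with
    | h p =>
    induction b using Quotient.inductionOn with
    | h q =>
    set K : Set X := Set.range ⇑p ∪ Set.range ⇑q with hK
    have hKc : IsCompact K := (hcomp p).union (hcomp q)
    have hxK : x ∈ K := Or.inl (hxmem p)
    have hpK : Set.range ⇑p ⊆ K := Set.subset_union_left
    have hqK : Set.range ⇑q ⊆ K := Set.subset_union_right
    have htK : Set.range ⇑(transAt (0 : Fin (n + 1)) q p) ⊆ K := by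
      refine (range_transAt _ _ _).trans ?_
      rw [Set.union_comm]
    have hmulXY := HomotopyGroup.mul_spec (N := Fin (n + 1)) (X := X) (x := x)
      (i := (0 : Fin (n + 1))) (p := p) (q := q)
    have hmulK := HomotopyGroup.mul_spec (N := Fin (n + 1)) (X := K) (x := ⟨x, hxK⟩)
      (i := (0 : Fin (n + 1))) (p := restr p hpK hxK) (q := restr q hqK hxK)
    have e : P K hKc hxK ⟦transAt (0 : Fin (n + 1)) (restr q hqK hxK) (restr p hpK hxK)⟧
        = P K hKc hxK ⟦restr p hpK hxK⟧ * P K hKc hxK ⟦restr q hqK hxK⟧ :=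
      (congrArg (P K hKc hxK) hmulK).symm.trans (map_mul _ _ _)
    have step : sig0 ⟦transAt (0 : Fin (n + 1)) q p⟧ = sig0 ⟦p⟧ * sig0 ⟦q⟧ := by
      rw [coh _ K hKc hxK htK,
        restr_transAt (0 : Fin (n + 1)) q p hqK hpK hxK htK, e,
        coh p K hKc hxK hpK, coh q K hKc hxK hqK]
    exact (congrArg sig0 hmulXY).trans step
  set sig : HomotopyGroup (Fin (n + 1)) X x →* G := MonoidHom.mk' sig0 hmul with hsig
  have hprop : ∀ (K : Set X) (hK : IsCompact K) (hx : x ∈ K)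
      (β : HomotopyGroup (Fin (n + 1)) K ⟨x, hx⟩),
      sig (HomotopyGroup.map (Fin (n + 1))
        (⟨Subtype.val, continuous_subtype_val⟩ : C(K, X)) rfl β) = P K hK hx β := by
    intro K hK hx β
    induction β using Quotient.inductionOn with
    | h r =>
    rw [map_mk]
    have hsub : Set.range ⇑(mapG (⟨Subtype.val, continuous_subtype_val⟩ : C(K, X)) rfl r)
        ⊆ K := by rintro _ ⟨y, rfl⟩; exact (r y).2
    have hr : restr (mapG (⟨Subtype.val, continuous_subtype_val⟩ : C(K, X)) rfl r) hsub hx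
        = r := GenLoop.ext _ _ fun y => Subtype.ext rfl
    calc sig ⟦mapG (⟨Subtype.val, continuous_subtype_val⟩ : C(K, X)) rfl r⟧
        = P K hK hx ⟦restr (mapG (⟨Subtype.val, continuous_subtype_val⟩ : C(K, X)) rfl r)
            hsub hx⟧ := coh _ K hK hx hsub
      _ = P K hK hx ⟦r⟧ := by rw [hr]
  refine ⟨sig, hprop, ?_⟩
  intro sig' hprop'
  ext α
  induction α using Quotient.inductionOn with
  | h p =>
  have key : ∀ (s : HomotopyGroup (Fin (n + 1)) X x →* G),
      (∀ (K : Set X) (hK : IsCompact K) (hx : x ∈ K)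
        (β : HomotopyGroup (Fin (n + 1)) K ⟨x, hx⟩),
        s (HomotopyGroup.map (Fin (n + 1))
          (⟨Subtype.val, continuous_subtype_val⟩ : C(K, X)) rfl β) = P K hK hx β) →
      s ⟦p⟧ = P (Set.range ⇑p) (hcomp p) (hxmem p) ⟦restr p subset_rfl (hxmem p)⟧ := by
    intro s hs
    have hval : (⟦p⟧ : HomotopyGroup (Fin (n + 1)) X x) = HomotopyGroup.map (Fin (n + 1))
        (⟨Subtype.val, continuous_subtype_val⟩ : C(Set.range ⇑p, X)) rfl
        ⟦restr p subset_rfl (hxmem p)⟧ := by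
      rw [map_mk, mapG_val_restr]
      exact rfl
    rw [hval]; exact hs _ _ _ _
  rw [key sig' hprop', key sig hprop]
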